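/- arXiv:1409.2937 — 2 statements merged into one kernel-verified Lean document; each statement's English description precedes it below -/
import Mathlib

section
/- For every integer n ≥ 2: maxp_6(n) = 5^(n/4) if n ≡ 0 (mod 4), maxp_6(n) = 7 · 5^((n-5)/4) if n ≡ 1 (mod 4), maxp_6(n) = 2 · 5^((n-2)/4) if n ≡ 2 (mod 4), and maxp_6(n) = 3 · 5^((n-3)/4) if n ≡ 3 (mod 4). -/
/-- `pk k n` is the number of `k`-regular partitions of `n`,
i.e. partitions of `n` in which no part is divisible by `k`. -/
noncomputable def pk (k n : ℕ) : ℕ :=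
  Fintype.card {μ : n.Partition // ∀ i ∈ μ.parts, ¬ k ∣ i}


/-- Extension of `pk k` to partitions: the product of `pk k` over the parts. -/
noncomputable def pkext (k : ℕ) {n : ℕ} (μ : n.Partition) : ℕ :=
  (μ.parts.map (pk k)).prod

def Mtab : List (List ℕ) :=
  [[0, 1],
   [0, 1, 0],
   [0, 2, 1, 0],
   [0, 3, 1, 1, 0],
   [0, 5, 2, 1, 1, 0],
   [0, 7, 2, 1, 1, 1, 0],
   [0, 10, 3, 1, 0, 0, 0, 0],
   [0, 14, 4, 2, 1, 1, 1, 1, 0],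
   [0, 20, 6, 3, 2, 1, 1, 1, 1, 0],
   [0, 27, 7, 3, 2, 1, 1, 1, 1, 1, 0],
   [0, 37, 10, 4, 2, 2, 1, 1, 1, 1, 1, 0],
   [0, 49, 12, 5, 2, 1, 1, 1, 1, 1, 1, 1, 0],
   [0, 65, 16, 6, 3, 1, 0, 0, 0, 0, 0, 0, 0, 0],
   [0, 85, 20, 8, 4, 2, 1, 1, 1, 1, 1, 1, 1, 1, 0],
   [0, 111, 26, 10, 5, 3, 2, 2, 1, 1, 1, 1, 1, 1, 1, 0],
   [0, 143, 32, 12, 6, 4, 2, 2, 1, 1, 1, 1, 1, 1, 1, 1, 0],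
   [0, 184, 41, 15, 7, 4, 3, 3, 2, 1, 1, 1, 1, 1, 1, 1, 1, 0],
   [0, 234, 50, 18, 8, 4, 3, 3, 2, 1, 1, 1, 1, 1, 1, 1, 1, 1, 0],
   [0, 297, 63, 22, 10, 5, 3, 3, 2, 1, 0, 0, 0, 0, 0, 0, 0, 0, 0, 0],
   [0, 374, 77, 27, 12, 6, 3, 3, 3, 2, 1, 1, 1, 1, 1, 1, 1, 1, 1, 1, 0],
   [0, 470, 96, 33, 15, 8, 4, 4, 3, 3, 2, 1, 1, 1, 1, 1, 1, 1, 1, 1, 1, 0],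
   [0, 586, 116, 39, 17, 9, 5, 5, 3, 2, 2, 1, 1, 1, 1, 1, 1, 1, 1, 1, 1, 1, 0],
   [0, 729, 143, 47, 20, 10, 6, 6, 4, 3, 2, 2, 1, 1, 1, 1, 1, 1, 1, 1, 1, 1, 1, 0],
   [0, 902, 173, 57, 24, 12, 7, 7, 4, 3, 2, 1, 1, 1, 1, 1, 1, 1, 1, 1, 1, 1, 1, 1, 0],
   [0, 1113, 211, 68, 29, 14, 8, 8, 5, 3, 2, 1, 0, 0, 0, 0, 0, 0, 0, 0, 0, 0, 0, 0, 0, 0],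
   [0, 1367, 254, 81, 34, 17, 9, 9, 6, 4, 3, 2, 1, 1, 1, 1, 1, 1, 1, 1, 1, 1, 1, 1, 1, 1, 0],
   [0, 1674, 307, 96, 39, 19, 10, 10, 7, 5, 4, 3, 2, 2, 1, 1, 1, 1, 1, 1, 1, 1, 1, 1, 1, 1, 1, 0],
   [0, 2042, 368, 114, 46, 22, 12, 12, 8, 5, 4, 3, 2, 2, 1, 1, 1, 1, 1, 1, 1, 1, 1, 1, 1, 1, 1, 1, 0],
   [0, 2485, 443, 136, 55, 26, 14, 14, 9, 6, 4, 4, 3, 3, 2, 1, 1, 1, 1, 1, 1, 1, 1, 1, 1, 1, 1, 1, 1, 0],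
   [0, 3013, 528, 160, 64, 30, 16, 16, 10, 7, 4, 3, 3, 3, 2, 1, 1, 1, 1, 1, 1, 1, 1, 1, 1, 1, 1, 1, 1, 1, 0],
   [0, 3645, 632, 189, 75, 36, 19, 19, 12, 8, 6, 4, 3, 3, 2, 1, 0, 0, 0, 0, 0, 0, 0, 0, 0, 0, 0, 0, 0, 0, 0, 0],
   [0, 4395, 750, 222, 86, 40, 21, 21, 13, 9, 6, 4, 3, 3, 3, 2, 1, 1, 1, 1, 1, 1, 1, 1, 1, 1, 1, 1, 1, 1, 1, 1, 0],
   [0, 5288, 893, 261, 101, 46, 24, 24, 15, 10, 7, 5, 4, 4, 3, 3, 2, 1, 1, 1, 1, 1, 1, 1, 1, 1, 1, 1, 1, 1, 1, 1, 1, 0],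
   [0, 6344, 1056, 306, 117, 53, 27, 27, 17, 11, 8, 6, 4, 4, 3, 2, 2, 1, 1, 1, 1, 1, 1, 1, 1, 1, 1, 1, 1, 1, 1, 1, 1, 1, 0],
   [0, 7595, 1251, 358, 136, 61, 31, 31, 19, 12, 8, 6, 5, 5, 4, 3, 2, 2, 1, 1, 1, 1, 1, 1, 1, 1, 1, 1, 1, 1, 1, 1, 1, 1, 1, 0]]


/-- patched certificate lookup -/
def Mf (k n : ℕ) : ℕ :=
  if n = 0 then 1 else if n < k then 0 else (Mtab.getD n []).getD k 0

def Btab : List (List ℕ) :=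
  [[], [390625, 546875, 781250, 1171875], [156250, 156250, 234375, 390625],
   [109375, 78125, 78125, 234375], [93750, 62500, 31250, 125000],
   [75000, 50000, 25000, 100000], [71000, 35000, 15000, 95000],
   [71000, 35000, 15000, 95000], [69600, 34400, 11200, 80800],
   [66816, 33024, 10752, 77568], [66195, 30351, 9431, 77137],
   [66119, 29733, 6783, 75922], [65881, 29678, 6175, 73277],
   [65881, 29678, 6175, 73277], [65763, 29150, 5937, 73227]]

def Bf (k r : ℕ) : ℕ := (Btab.getD k []).getD r 0

def Lam : ℕ := 390625

def gnat : ℕ → ℕ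
  | 0 => 1
  | 1 => 1
  | 2 => 2
  | 3 => 3
  | 4 => 5
  | 5 => 7
  | (n+6) => 5 * gnat (n+2)

set_option maxRecDepth 100000
set_option maxHeartbeats 2000000

/-- table consistency -/
lemma M_consist : ∀ n < 35, ∀ k < 35, 1 ≤ k → k ≤ n →
    Mf k n = if k % 6 = 0 then Mf (k+1) n else Mf (k+1) n + Mf k (n-k) := by decide

/-- layer numeric check -/
lemma layer_check : ∀ n < 35, 21 ≤ n → ∀ k < 14, 1 ≤ k →
    Lam * Mf k n ≤ Bf k (n % 4) * 5 ^ (n / 4) := by decide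

/-- small values of p6 vs g -/
lemma small_check : ∀ n < 21, Mf 1 n ≤ gnat n := by decide

/-- tail small values -/
lemma tail_small_check : ∀ n < 19, 1 ≤ n → Lam * Mf 14 n ≤ Bf 14 (n % 4) * 5 ^ (n / 4) := by
  decide

/-- tail product-bound region -/
lemma tail_prod_check : ∀ n < 127, 19 ≤ n →
    Lam * (∏ i ∈ Finset.range (n / 14), (n / (i+1) + 1)) ≤ Bf 14 (n % 4) * 5 ^ (n / 4) := by
  decide

/-- pure power base region -/
lemma tail_pow_base : ∀ n < 127, 99 ≤ n →
    Lam * 140 ^ (n / 14) ≤ Bf 14 (n % 4) * 5 ^ (n / 4) := by decide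

/-- step condition table -/
lemma cond_check : ∀ k < 14, 1 ≤ k → ¬ (k % 6 = 0) → ∀ r < 4,
    Bf k ((r + 3*k) % 4) + Bf (k+1) r * 5 ^ ((k + (r + 3*k) % 4 - r)/4)
      ≤ Bf k r * 5 ^ ((k + (r + 3*k) % 4 - r)/4) := by decide

lemma bf_dvd_eq : ∀ k < 14, 1 ≤ k → k % 6 = 0 → ∀ r < 4, Bf (k+1) r ≤ Bf k r := by decide






/-- number of 6-regular partitions of n with all parts ≥ k -/
def sReg (k n : ℕ) : ℕ :=
  Fintype.card {μ : n.Partition // ∀ i ∈ μ.parts, ¬ 6 ∣ i ∧ k ≤ i}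

lemma pk6_eq_sReg (n : ℕ) : pk 6 n = sReg 1 n := by
  apply Fintype.card_congr
  apply Equiv.subtypeEquivRight
  intro μ
  constructor
  · exact fun h i hi => ⟨h i hi, μ.parts_pos hi⟩
  · exact fun h i hi => (h i hi).1

lemma sReg_zero (k : ℕ) : sReg k 0 = 1 := by
  rw [sReg, Fintype.card_eq_one_iff]
  refine ⟨⟨default, ?_⟩, ?_⟩
  · intro i hi
    simp at hi
  · rintro ⟨μ, h⟩
    apply Subtype.ext
    apply Subsingleton.elim

lemma sReg_of_lt {k n : ℕ} (h1 : 1 ≤ n) (h2 : n < k) : sReg k n = 0 := by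
  rw [sReg, Fintype.card_eq_zero_iff]
  constructor
  rintro ⟨μ, h⟩
  have hne : μ.parts ≠ 0 := by
    intro h0
    have := μ.parts_sum
    rw [h0] at this
    simp at this
    omega
  obtain ⟨i, hi⟩ := Multiset.exists_mem_of_ne_zero hne
  have h3 : k ≤ i := (h i hi).2
  have h4 : i ≤ μ.parts.sum := Multiset.single_le_sum (fun x _ => Nat.zero_le x) i hi
  rw [μ.parts_sum] at h4
  omega

lemma sReg_dvd {k n : ℕ} (hd : 6 ∣ k) : sReg k n = sReg (k+1) n := by
  apply Fintype.card_congr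
  apply Equiv.subtypeEquivRight
  intro μ
  constructor
  · intro h i hi
    obtain ⟨hd6, hk⟩ := h i hi
    refine ⟨hd6, ?_⟩
    rcases Nat.eq_or_lt_of_le hk with h' | h'
    · exact absurd (h' ▸ hd) hd6
    · omega
  · exact fun h i hi => ⟨(h i hi).1, by have := (h i hi).2; omega⟩

lemma sReg_rec {k n : ℕ} (hk : 1 ≤ k) (hd : ¬ 6 ∣ k) (hkn : k ≤ n) :
    sReg k n = sReg (k+1) n + sReg k (n-k) := by
  classical
  have hsplit :
      sReg k n
        = Fintype.card {μ : n.Partition // (∀ i ∈ μ.parts, ¬ 6 ∣ i ∧ k ≤ i) ∧ k ∈ μ.parts}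
          + Fintype.card {μ : n.Partition // (∀ i ∈ μ.parts, ¬ 6 ∣ i ∧ k ≤ i) ∧ k ∉ μ.parts} := by
    classical
    rw [sReg, Fintype.card_subtype, Fintype.card_subtype, Fintype.card_subtype]
    rw [← Finset.filter_filter, ← Finset.filter_filter]
    exact (Finset.card_filter_add_card_filter_not
      (s := Finset.univ.filter (fun μ : n.Partition => ∀ i ∈ μ.parts, ¬ 6 ∣ i ∧ k ≤ i))
      (fun μ => k ∈ μ.parts)).symm
  rw [hsplit]
  have e2 : {μ : n.Partition // (∀ i ∈ μ.parts, ¬ 6 ∣ i ∧ k ≤ i) ∧ k ∉ μ.parts}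
      ≃ {μ : n.Partition // ∀ i ∈ μ.parts, ¬ 6 ∣ i ∧ k + 1 ≤ i} := by
    apply Equiv.subtypeEquivRight
    intro μ
    constructor
    · rintro ⟨h, hno⟩ i hi
      obtain ⟨h6, hk'⟩ := h i hi
      refine ⟨h6, ?_⟩
      rcases Nat.eq_or_lt_of_le hk' with h' | h'
      · exact absurd (h' ▸ hi) hno
      · omega
    · intro h
      refine ⟨fun i hi => ⟨(h i hi).1, by have := (h i hi).2; omega⟩, fun hmem => ?_⟩
      have := (h k hmem).2
      omega
  have e1 : {μ : n.Partition // (∀ i ∈ μ.parts, ¬ 6 ∣ i ∧ k ≤ i) ∧ k ∈ μ.parts}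
      ≃ {ν : (n-k).Partition // ∀ i ∈ ν.parts, ¬ 6 ∣ i ∧ k ≤ i} := by
    refine ⟨?_, ?_, ?_, ?_⟩
    · rintro ⟨μ, hP, hmem⟩
      refine ⟨⟨μ.parts.erase k, ?_, ?_⟩, ?_⟩
      · intro i hi
        exact (hP i (Multiset.mem_of_mem_erase hi)).2.trans_lt' (by omega)
      · have h2 : k + (μ.parts.erase k).sum = n := by
          rw [← Multiset.sum_cons, Multiset.cons_erase hmem, μ.parts_sum]
        omega
      · intro i hi
        exact hP i (Multiset.mem_of_mem_erase hi)
    · rintro ⟨ν, hP⟩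
      refine ⟨⟨k ::ₘ ν.parts, ?_, ?_⟩, ?_, ?_⟩
      · intro i hi
        rcases Multiset.mem_cons.mp hi with h | h
        · omega
        · exact ν.parts_pos h
      · rw [Multiset.sum_cons, ν.parts_sum]
        omega
      · intro i hi
        rcases Multiset.mem_cons.mp hi with h | h
        · exact ⟨by rw [h]; exact hd, h.ge⟩
        · exact hP i h
      · exact Multiset.mem_cons_self k ν.parts
    · rintro ⟨μ, hP, hmem⟩
      apply Subtype.ext
      apply Nat.Partition.ext
      simp only
      exact Multiset.cons_erase hmem
    · rintro ⟨ν, hP⟩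
      apply Subtype.ext
      apply Nat.Partition.ext
      simp only
      exact Multiset.erase_cons_head k ν.parts
  rw [Fintype.card_congr e1, Fintype.card_congr e2, sReg, sReg]
  omega





lemma sorted_nth_mul_le_sum : ∀ (l : List ℕ), l.Pairwise (· ≥ ·) →
    ∀ i (h : i < l.length), (i+1) * l.get ⟨i, h⟩ ≤ l.sum := by
  intro l
  induction l with
  | nil => intro _ i h; simp at h
  | cons a t IH =>
    intro hs i h
    rw [List.pairwise_cons] at hs
    match i with
    | 0 => simpa using Nat.le_add_right a t.sum
    | (j+1) =>
      have hj : j < t.length := by simpa using h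
      have hget : (a :: t).get ⟨j+1, h⟩ = t.get ⟨j, hj⟩ := rfl
      have hmem : t.get ⟨j, hj⟩ ∈ t := t.get_mem ⟨j, hj⟩
      have hle : t.get ⟨j, hj⟩ ≤ a := hs.1 _ hmem
      have hx := IH hs.2 j hj
      rw [hget, List.sum_cons]
      calc (j+1+1) * t.get ⟨j, hj⟩ = t.get ⟨j, hj⟩ + (j+1) * t.get ⟨j, hj⟩ := by ring
      _ ≤ a + t.sum := Nat.add_le_add hle hx

lemma list_eq_of_getD {m : ℕ} {l₁ l₂ : List ℕ}
    (h₁ : ∀ x ∈ l₁, 0 < x) (h₂ : ∀ x ∈ l₂, 0 < x)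
    (hl₁ : l₁.length ≤ m) (hl₂ : l₂.length ≤ m)
    (h : ∀ i < m, l₁.getD i 0 = l₂.getD i 0) : l₁ = l₂ := by
  have haux : ∀ (a b : List ℕ), (∀ x ∈ b, 0 < x) →
      (∀ i < m, a.getD i 0 = b.getD i 0) → a.length < b.length → b.length ≤ m → False := by
    intro a b hb hab hlt hbm
    have hi : a.length < m := lt_of_lt_of_le hlt hbm
    have hd1 : a.getD a.length 0 = 0 := List.getD_eq_default _ _ (le_refl _)
    have hd2 : b.getD a.length 0 = b.get ⟨a.length, hlt⟩ := List.getD_eq_get (l := b) (d := 0) ⟨a.length, hlt⟩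
    have hd3 : 0 < b.get ⟨a.length, hlt⟩ := hb _ (b.get_mem ⟨a.length, hlt⟩)
    rw [hab _ hi, hd2] at hd1
    omega
  have hlen : l₁.length = l₂.length := by
    rcases Nat.lt_trichotomy l₁.length l₂.length with hl | hl | hl
    · exact absurd (haux l₁ l₂ h₂ h hl hl₂) not_false
    · exact hl
    · exact absurd (haux l₂ l₁ h₁ (fun i hi => (h i hi).symm) hl hl₁) not_false
  apply List.ext_get hlen
  intro i hi1 hi2
  rw [← List.getD_eq_get (l := l₁) (d := 0) ⟨i, hi1⟩, ← List.getD_eq_get (l := l₂) (d := 0) ⟨i, hi2⟩]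
  exact h i (lt_of_lt_of_le hi1 hl₁)

lemma sReg_le_prod (n : ℕ) :
    sReg 14 n ≤ ∏ i ∈ Finset.range (n / 14), (n / (i+1) + 1) := by
  classical
  set m := n / 14 with hm
  -- the sorted list of parts, descending
  let L : {μ : n.Partition // ∀ i ∈ μ.parts, ¬ 6 ∣ i ∧ 14 ≤ i} → List ℕ :=
    fun μ => (Multiset.sort μ.1.parts (· ≤ ·)).reverse
  have hLsum : ∀ μ, (L μ).sum = n := by
    intro μ
    show ((Multiset.sort μ.1.parts (· ≤ ·)).reverse).sum = n
    rw [List.sum_reverse]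
    have : ((Multiset.sort μ.1.parts (· ≤ ·) : List ℕ) : Multiset ℕ).sum = μ.1.parts.sum := by
      rw [Multiset.sort_eq]
    rw [Multiset.sum_coe] at this
    rw [this, μ.1.parts_sum]
  have hLmem : ∀ μ x, x ∈ L μ ↔ x ∈ μ.1.parts := by
    intro μ x
    show x ∈ (Multiset.sort μ.1.parts (· ≤ ·)).reverse ↔ _
    rw [List.mem_reverse, Multiset.mem_sort]
  have hLsorted : ∀ μ, (L μ).Pairwise (· ≥ ·) := by
    intro μ
    exact List.pairwise_reverse.mpr
      ((Multiset.pairwise_sort (s := μ.1.parts) (r := (· ≤ ·))).imp (fun h => h))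
  have hLlen : ∀ μ, (L μ).length ≤ m := by
    intro μ
    have h14 : Multiset.card μ.1.parts • 14 ≤ μ.1.parts.sum :=
      Multiset.card_nsmul_le_sum (fun x hx => (μ.2 x hx).2)
    rw [μ.1.parts_sum, smul_eq_mul] at h14
    have hlen : (L μ).length = Multiset.card μ.1.parts := by
      show (Multiset.sort μ.1.parts (· ≤ ·)).reverse.length = _
      rw [List.length_reverse, Multiset.length_sort]
    rw [hlen, hm]
    exact (Nat.le_div_iff_mul_le (by norm_num)).mpr h14
  have hLpos : ∀ μ x, x ∈ L μ → 0 < x := by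
    intro μ x hx
    exact μ.1.parts_pos ((hLmem μ x).mp hx)
  let F : {μ : n.Partition // ∀ i ∈ μ.parts, ¬ 6 ∣ i ∧ 14 ≤ i} →
      (∀ i : Fin m, Fin (n / (i.1+1) + 1)) := by
    intro μ
    refine fun i => ⟨(L μ).getD i.1 0, ?_⟩
    by_cases hil : i.1 < (L μ).length
    · rw [show (L μ).getD i.1 0 = (L μ).get ⟨i.1, hil⟩ from List.getD_eq_get (l := L μ) (d := 0) ⟨i.1, hil⟩]
      rw [Nat.lt_succ_iff]
      rw [Nat.le_div_iff_mul_le (Nat.succ_pos i.1)]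
      rw [mul_comm]
      calc (i.1+1) * (L μ).get ⟨i.1, hil⟩ ≤ (L μ).sum :=
            sorted_nth_mul_le_sum (L μ) (hLsorted μ) i.1 hil
      _ = n := hLsum μ
    · rw [List.getD_eq_default _ 0 (le_of_not_gt hil)]
      exact Nat.succ_pos _
  have hinj : Function.Injective F := by
    intro μ ν h
    have hD : ∀ i < m, (L μ).getD i 0 = (L ν).getD i 0 := by
      intro i hi
      have := congrFun h ⟨i, hi⟩
      exact congrArg Fin.val this
    have hLL : L μ = L ν :=
      list_eq_of_getD (hLpos μ) (hLpos ν) (hLlen μ) (hLlen ν) hD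
    have hparts : μ.1.parts = ν.1.parts := by
      have h4 : Multiset.sort μ.1.parts (· ≤ ·) = Multiset.sort ν.1.parts (· ≤ ·) := by
        have h3 := congrArg List.reverse hLL
        rwa [List.reverse_reverse, List.reverse_reverse] at h3
      have h5 := congrArg (fun l : List ℕ => (l : Multiset ℕ)) h4
      simp only [Multiset.sort_eq] at h5
      exact h5
    exact Subtype.ext (Nat.Partition.ext hparts)
  calc sReg 14 n ≤ Fintype.card (∀ i : Fin m, Fin (n / (i.1+1) + 1)) :=
        Fintype.card_le_of_injective F hinj
  _ = ∏ i : Fin m, (n / (i.1+1) + 1) := by simp [Fintype.card_pi]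
  _ = ∏ i ∈ Finset.range m, (n / (i+1) + 1) := Fin.prod_univ_eq_prod_range (fun j => n / (j+1) + 1) m

lemma prod_le_pow140 (n : ℕ) (hn : 14 ≤ n) :
    (∏ i ∈ Finset.range (n / 14), (n / (i+1) + 1)) ≤ 140 ^ (n / 14) := by
  set m := n / 14 with hm
  set P := ∏ i ∈ Finset.range m, (n / (i+1) + 1) with hP
  have hm1 : 1 ≤ m := by rw [hm]; omega
  have hA : (∏ i ∈ Finset.range m, (i+1)) * P ≤ (n+m) ^ m := by
    rw [hP, ← Finset.prod_mul_distrib]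
    calc ∏ i ∈ Finset.range m, ((i+1) * (n / (i+1) + 1))
        ≤ ∏ _i ∈ Finset.range m, (n+m) := by
          apply Finset.prod_le_prod'
          intro i hi
          have h1 : n / (i+1) * (i+1) ≤ n := Nat.div_mul_le_self n (i+1)
          have h2 : i + 1 ≤ m := Finset.mem_range.mp hi
          calc (i+1) * (n / (i+1) + 1) = n / (i+1) * (i+1) + (i+1) := by ring
          _ ≤ n + m := Nat.add_le_add h1 h2
    _ = (n+m) ^ m := by rw [Finset.prod_const, Finset.card_range]
  have hfact : (∏ i ∈ Finset.range m, (i+1)) = Nat.factorial m :=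
    Finset.prod_range_add_one_eq_factorial m
  have hB : m ^ m ≤ 4 ^ m * Nat.factorial m := by
    have hc1 : (m+1) ^ m ≤ (2*m).descFactorial m := by
      have := Nat.pow_sub_le_descFactorial (2*m) m
      have he : 2*m + 1 - m = m + 1 := by omega
      rwa [he] at this
    have hc2 : (2*m).choose m ≤ 4 ^ m := by
      have hsum := Nat.sum_range_choose (2*m)
      have hmem : m ∈ Finset.range (2*m+1) := by simp; omega
      have hle : (2*m).choose m ≤ ∑ i ∈ Finset.range (2*m+1), (2*m).choose i :=
        Finset.single_le_sum (fun i _ => Nat.zero_le _) hmem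
      rw [hsum] at hle
      calc (2*m).choose m ≤ 2 ^ (2*m) := hle
      _ = 4 ^ m := by rw [pow_mul]; norm_num
    calc m ^ m ≤ (m+1) ^ m := Nat.pow_le_pow_left (by omega) m
    _ ≤ (2*m).descFactorial m := hc1
    _ = Nat.factorial m * (2*m).choose m := Nat.descFactorial_eq_factorial_mul_choose _ _
    _ ≤ Nat.factorial m * 4 ^ m := Nat.mul_le_mul_left _ hc2
    _ = 4 ^ m * Nat.factorial m := mul_comm _ _
  have hC : m ^ m * P ≤ (4*(n+m)) ^ m := by
    calc m ^ m * P ≤ (4 ^ m * Nat.factorial m) * P := Nat.mul_le_mul_right P hB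
    _ = 4 ^ m * (Nat.factorial m * P) := by ring
    _ ≤ 4 ^ m * (n+m) ^ m := by
        apply Nat.mul_le_mul_left
        rw [← hfact]
        exact hA
    _ = (4*(n+m)) ^ m := (mul_pow _ _ _).symm
  have hnm : 4*(n+m) ≤ 140*m := by omega
  have hD : m ^ m * P ≤ m ^ m * 140 ^ m := by
    calc m ^ m * P ≤ (4*(n+m)) ^ m := hC
    _ ≤ (140*m) ^ m := Nat.pow_le_pow_left hnm m
    _ = m ^ m * 140 ^ m := by rw [mul_pow]; ring
  exact Nat.le_of_mul_le_mul_left hD (pow_pos (show 0 < m by omega) m)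

-- ============ part 4: glue ============

lemma gnat_add_four {n : ℕ} (hn : 2 ≤ n) : gnat (n+4) = 5 * gnat n := by
  match n, hn with
  | (m+2), _ => rfl

lemma gnat_supermul : ∀ s a b, a + b = s → 1 ≤ a → gnat a * gnat b ≤ gnat (a+b) := by
  intro s
  induction s using Nat.strong_induction_on with
  | _ s IH =>
  intro a b hs ha
  by_cases hb0 : b = 0
  · subst hb0
    simp [show gnat 0 = 1 from rfl]
  by_cases ha6 : 6 ≤ a
  · have h4 : gnat a = 5 * gnat (a-4) := by
      have h := gnat_add_four (n := a-4) (by omega)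
      rw [show a-4+4 = a by omega] at h
      rw [h]
    have hsum : gnat (a+b) = 5 * gnat (a-4+b) := by
      have h := gnat_add_four (n := a-4+b) (by omega)
      rw [show a-4+b+4 = a+b by omega] at h
      rw [h]
    have hIH := IH (s-4) (by omega) (a-4) b (by omega) (by omega)
    calc gnat a * gnat b = 5 * (gnat (a-4) * gnat b) := by rw [h4]; ring
    _ ≤ 5 * gnat (a-4+b) := Nat.mul_le_mul_left 5 hIH
    _ = gnat (a+b) := hsum.symm
  by_cases hb6 : 6 ≤ b
  · have h4 : gnat b = 5 * gnat (b-4) := by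
      have h := gnat_add_four (n := b-4) (by omega)
      rw [show b-4+4 = b by omega] at h
      rw [h]
    have hsum : gnat (a+b) = 5 * gnat (a+(b-4)) := by
      have h := gnat_add_four (n := a+(b-4)) (by omega)
      rw [show a+(b-4)+4 = a+b by omega] at h
      rw [h]
    have hIH := IH (s-4) (by omega) a (b-4) (by omega) ha
    calc gnat a * gnat b = 5 * (gnat a * gnat (b-4)) := by rw [h4]; ring
    _ ≤ 5 * gnat (a+(b-4)) := Nat.mul_le_mul_left 5 hIH
    _ = gnat (a+b) := hsum.symm
  · have ha5 : a ≤ 5 := by omega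
    have hb5 : b ≤ 5 := by omega
    have hb1 : 1 ≤ b := by omega
    clear hs IH hb0 ha6 hb6
    interval_cases a <;> interval_cases b <;> decide

lemma sReg_eq_M : ∀ n, n ≤ 34 → ∀ j k, 1 ≤ k → n < k + j → sReg k n = Mf k n := by
  intro n
  induction n using Nat.strong_induction_on with
  | _ n IHn =>
  intro hn34 j
  induction j with
  | zero =>
    intro k hk hnk
    by_cases hn0 : n = 0
    · subst hn0
      rw [sReg_zero, Mf, if_pos rfl]
    · rw [sReg_of_lt (by omega) (by omega), Mf, if_neg hn0, if_pos (by omega)]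
  | succ j IHj =>
    intro k hk hnk
    by_cases hkn : n < k
    · by_cases hn0 : n = 0
      · subst hn0
        rw [sReg_zero, Mf, if_pos rfl]
      · rw [sReg_of_lt (by omega) (by omega), Mf, if_neg hn0, if_pos (by omega)]
    · have hk35 : k < 35 := by omega
      have hrec := M_consist n (by omega) k hk35 hk (by omega)
      by_cases hdvd : k % 6 = 0
      · rw [sReg_dvd (Nat.dvd_of_mod_eq_zero hdvd), hrec, if_pos hdvd]
        exact IHj (k+1) (by omega) (by omega)
      · have hnd : ¬ 6 ∣ k := by
          intro hdd
          omega
        rw [sReg_rec hk hnd (by omega), hrec, if_neg hdvd]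
        have h1 := IHj (k+1) (by omega) (by omega)
        have h2 := IHn (n-k) (by omega) (by omega) (n-k+1) k hk (by omega)
        rw [h1, h2]

lemma sReg_eq_M' (n k : ℕ) (hn : n ≤ 34) (hk : 1 ≤ k) : sReg k n = Mf k n :=
  sReg_eq_M n hn (n+1) k hk (by omega)

lemma tail_pow : ∀ n, 99 ≤ n → Lam * 140 ^ (n/14) ≤ Bf 14 (n % 4) * 5 ^ (n/4) := by
  intro n
  induction n using Nat.strong_induction_on with
  | _ n IH =>
  intro h99
  by_cases hlt : n < 127
  · exact tail_pow_base n hlt h99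
  · have hIH := IH (n-28) (by omega) (by omega)
    have e1 : n / 14 = (n-28)/14 + 2 := by omega
    have e2 : n / 4 = (n-28)/4 + 7 := by omega
    have e3 : n % 4 = (n-28) % 4 := by omega
    rw [e1, e2, e3, pow_add, pow_add]
    calc Lam * (140^((n-28)/14) * 140^2)
        = (Lam * 140^((n-28)/14)) * 19600 := by norm_num; ring
    _ ≤ (Bf 14 ((n-28)%4) * 5^((n-28)/4)) * 19600 := Nat.mul_le_mul_right _ hIH
    _ ≤ (Bf 14 ((n-28)%4) * 5^((n-28)/4)) * 5^7 := Nat.mul_le_mul_left _ (by norm_num)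
    _ = Bf 14 ((n-28)%4) * (5^((n-28)/4) * 5^7) := by ring

lemma tail14 : ∀ n, 1 ≤ n → Lam * sReg 14 n ≤ Bf 14 (n % 4) * 5 ^ (n / 4) := by
  intro n h1
  by_cases h19 : n < 19
  · rw [sReg_eq_M' n 14 (by omega) (by norm_num)]
    exact tail_small_check n h19 h1
  by_cases h127 : n < 127
  · calc Lam * sReg 14 n
        ≤ Lam * ∏ i ∈ Finset.range (n / 14), (n / (i+1) + 1) :=
          Nat.mul_le_mul_left _ (sReg_le_prod n)
    _ ≤ Bf 14 (n % 4) * 5 ^ (n / 4) := tail_prod_check n h127 (by omega)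
  · calc Lam * sReg 14 n
        ≤ Lam * ∏ i ∈ Finset.range (n / 14), (n / (i+1) + 1) :=
          Nat.mul_le_mul_left _ (sReg_le_prod n)
    _ ≤ Lam * 140 ^ (n/14) := Nat.mul_le_mul_left _ (prod_le_pow140 n (by omega))
    _ ≤ Bf 14 (n % 4) * 5 ^ (n / 4) := tail_pow n (by omega)

theorem main_bound : ∀ n, 21 ≤ n → ∀ k, 1 ≤ k → k ≤ 14 →
    Lam * sReg k n ≤ Bf k (n % 4) * 5 ^ (n / 4) := by
  intro n
  induction n using Nat.strong_induction_on with
  | _ n IHn =>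
  intro hn k hk1 hk14
  by_cases hk' : k = 14
  · subst hk'
    exact tail14 n (by omega)
  by_cases hn35 : n < 35
  · rw [sReg_eq_M' n k (by omega) hk1]
    exact layer_check n hn35 hn k (by omega) hk1
  · have inner : ∀ j, ∀ k', 1 ≤ k' → k' ≤ 14 → 14 ≤ k' + j →
        Lam * sReg k' n ≤ Bf k' (n % 4) * 5 ^ (n / 4) := by
      intro j
      induction j with
      | zero =>
        intro k' h1 h2 h3
        have hx : k' = 14 := by omega
        subst hx
        exact tail14 n (by omega)
      | succ j IHj =>
        intro k' h1 h2 h3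
        by_cases hk14' : k' = 14
        · subst hk14'
          exact tail14 n (by omega)
        by_cases hd : k' % 6 = 0
        · rw [sReg_dvd (Nat.dvd_of_mod_eq_zero hd)]
          have hub := IHj (k'+1) (by omega) (by omega) (by omega)
          have hb := bf_dvd_eq k' (by omega) h1 hd (n%4) (Nat.mod_lt n (by norm_num))
          calc Lam * sReg (k'+1) n ≤ Bf (k'+1) (n%4) * 5^(n/4) := hub
          _ ≤ Bf k' (n%4) * 5^(n/4) := Nat.mul_le_mul_right _ hb
        · have hnd : ¬ 6 ∣ k' := by
            intro hdd
            omega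
          have hrec := sReg_rec h1 hnd (show k' ≤ n by omega)
          have hX := IHj (k'+1) (by omega) (by omega) (by omega)
          have hY := IHn (n-k') (by omega) (by omega) k' h1 (by omega)
          set r := n % 4 with hr
          set q := n / 4 with hq
          set r' := (n - k') % 4 with hr'
          set q' := (n - k') / 4 with hq'
          set δ := (k' + (r + 3*k') % 4 - r)/4 with hδ
          have hrr : r' = (r + 3*k') % 4 := by omega
          have hqq : q = q' + δ := by rw [hδ]; omega
          have hcond := cond_check k' (by omega) h1 hd r (by omega)
          rw [← hδ, ← hrr] at hcond
          rw [hrec, Nat.mul_add]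
          calc Lam * sReg (k'+1) n + Lam * sReg k' (n-k')
              ≤ Bf (k'+1) r * 5^q + Bf k' r' * 5^q' := Nat.add_le_add hX hY
          _ = (Bf (k'+1) r * 5^δ + Bf k' r') * 5^q' := by rw [hqq]; ring
          _ ≤ (Bf k' r * 5^δ) * 5^q' := by
              apply Nat.mul_le_mul_right
              calc Bf (k'+1) r * 5^δ + Bf k' r' = Bf k' r' + Bf (k'+1) r * 5^δ := by ring
              _ ≤ Bf k' r * 5^δ := hcond
          _ = Bf k' r * 5^q := by rw [hqq]; ring
    exact inner 14 k hk1 (by omega) (by omega)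

lemma gnat_coeff : ∀ n, 2 ≤ n → Lam * gnat n = Bf 1 (n % 4) * 5 ^ (n / 4) := by
  intro n
  induction n using Nat.strong_induction_on with
  | _ n IH =>
  intro h2
  by_cases h6 : n < 6
  · interval_cases n <;> decide
  · have h4 := gnat_add_four (n := n-4) (by omega)
    rw [show n-4+4 = n by omega] at h4
    have hIH := IH (n-4) (by omega) (by omega)
    have e1 : n % 4 = (n-4) % 4 := by omega
    have e2 : n / 4 = (n-4)/4 + 1 := by omega
    rw [h4, e1, e2, pow_add]
    calc Lam * (5 * gnat (n-4)) = (Lam * gnat (n-4)) * 5 := by ring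
    _ = (Bf 1 ((n-4)%4) * 5^((n-4)/4)) * 5 := by rw [hIH]
    _ = Bf 1 ((n-4)%4) * (5^((n-4)/4) * 5^1) := by ring

lemma pk6_le_gnat : ∀ n, pk 6 n ≤ gnat n := by
  intro n
  by_cases h21 : n < 21
  · rw [pk6_eq_sReg, sReg_eq_M' n 1 (by omega) (le_refl 1)]
    exact small_check n h21
  · have h := main_bound n (by omega) 1 (le_refl 1) (by norm_num)
    rw [pk6_eq_sReg]
    have hg := gnat_coeff n (by omega)
    have hh : Lam * sReg 1 n ≤ Lam * gnat n := by rw [hg]; exact h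
    exact Nat.le_of_mul_le_mul_left hh (by norm_num [Lam])

lemma pkext_le_gnat {n : ℕ} (μ : n.Partition) : pkext 6 μ ≤ gnat n := by
  have key : ∀ s : Multiset ℕ, (∀ i ∈ s, 0 < i) → (s.map (pk 6)).prod ≤ gnat s.sum := by
    intro s
    induction s using Multiset.induction_on with
    | empty => intro _; simp [show gnat 0 = 1 from rfl]
    | cons a t IH =>
      intro hpos
      rw [Multiset.map_cons, Multiset.prod_cons, Multiset.sum_cons]
      calc pk 6 a * (t.map (pk 6)).prod ≤ gnat a * gnat t.sum :=
        Nat.mul_le_mul (pk6_le_gnat a) (IH (fun i hi => hpos i (Multiset.mem_cons_of_mem hi)))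
      _ ≤ gnat (a + t.sum) :=
        gnat_supermul (a + t.sum) a t.sum rfl (hpos a (Multiset.mem_cons_self a t))
  have hk := key μ.parts (fun i hi => μ.parts_pos hi)
  rw [μ.parts_sum] at hk
  exact hk

lemma pk6_val : pk 6 2 = 2 ∧ pk 6 3 = 3 ∧ pk 6 4 = 5 ∧ pk 6 5 = 7 := by
  refine ⟨?_, ?_, ?_, ?_⟩ <;>
    rw [pk6_eq_sReg, sReg_eq_M' _ 1 (by omega) (le_refl 1)] <;> decide

lemma gnat_mod0 {n : ℕ} (h : n % 4 = 0) (h2 : 2 ≤ n) : gnat n = 5 ^ (n/4) := by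
  have hg := gnat_coeff n h2
  rw [h] at hg
  apply Nat.eq_of_mul_eq_mul_left (show 0 < Lam by norm_num [Lam])
  rw [hg]
  norm_num [Bf, Btab, Lam]

lemma gnat_mod1 {n : ℕ} (h : n % 4 = 1) (h5 : 5 ≤ n) : gnat n = 7 * 5 ^ ((n-5)/4) := by
  have hq : n/4 = (n-5)/4 + 1 := by omega
  have hg := gnat_coeff n (by omega)
  rw [h, hq, pow_add] at hg
  apply Nat.eq_of_mul_eq_mul_left (show 0 < Lam by norm_num [Lam])
  rw [hg]
  simp [Bf, Btab, Lam]
  ring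

lemma gnat_mod2 {n : ℕ} (h : n % 4 = 2) (h2 : 2 ≤ n) : gnat n = 2 * 5 ^ ((n-2)/4) := by
  have hq : (n-2)/4 = n/4 := by omega
  have hg := gnat_coeff n h2
  rw [h] at hg
  apply Nat.eq_of_mul_eq_mul_left (show 0 < Lam by norm_num [Lam])
  rw [hg, hq]
  simp [Bf, Btab, Lam]
  ring

lemma gnat_mod3 {n : ℕ} (h : n % 4 = 3) (h2 : 2 ≤ n) : gnat n = 3 * 5 ^ ((n-3)/4) := by
  have hq : (n-3)/4 = n/4 := by omega
  have hg := gnat_coeff n h2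
  rw [h] at hg
  apply Nat.eq_of_mul_eq_mul_left (show 0 < Lam by norm_num [Lam])
  rw [hg, hq]
  simp [Bf, Btab, Lam]
  ring

/-- partition with one part `x` and `q` parts equal to 4 -/
def consPart (n x q : ℕ) (hx : 0 < x) (hsum : x + 4*q = n) : n.Partition where
  parts := x ::ₘ Multiset.replicate q 4
  parts_pos := by
    intro i hi
    rcases Multiset.mem_cons.mp hi with rfl | hi'
    · exact hx
    · have := Multiset.eq_of_mem_replicate hi'
      omega
  parts_sum := by
    rw [Multiset.sum_cons, Multiset.sum_replicate, smul_eq_mul]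
    omega

/-- partition with `q` parts equal to 4 -/
def repPart (n q : ℕ) (hsum : 4*q = n) : n.Partition where
  parts := Multiset.replicate q 4
  parts_pos := by
    intro i hi
    have := Multiset.eq_of_mem_replicate hi
    omega
  parts_sum := by
    rw [Multiset.sum_replicate, smul_eq_mul]
    omega


theorem maxp6_formula (n : ℕ) (hn : 2 ≤ n) :
    (n % 4 = 0 →
      IsGreatest {m : ℕ | ∃ μ : n.Partition, (∀ i ∈ μ.parts, ¬ 6 ∣ i) ∧ pkext 6 μ = m}
        (5 ^ (n / 4))) ∧
    (n % 4 = 1 →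
      IsGreatest {m : ℕ | ∃ μ : n.Partition, (∀ i ∈ μ.parts, ¬ 6 ∣ i) ∧ pkext 6 μ = m}
        (7 * 5 ^ ((n - 5) / 4))) ∧
    (n % 4 = 2 →
      IsGreatest {m : ℕ | ∃ μ : n.Partition, (∀ i ∈ μ.parts, ¬ 6 ∣ i) ∧ pkext 6 μ = m}
        (2 * 5 ^ ((n - 2) / 4))) ∧
    (n % 4 = 3 →
      IsGreatest {m : ℕ | ∃ μ : n.Partition, (∀ i ∈ μ.parts, ¬ 6 ∣ i) ∧ pkext 6 μ = m}
        (3 * 5 ^ ((n - 3) / 4))) := by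
  obtain ⟨hv2, hv3, hv4, hv5⟩ := pk6_val
  have hub : ∀ m ∈ {m : ℕ | ∃ μ : n.Partition, (∀ i ∈ μ.parts, ¬ 6 ∣ i) ∧ pkext 6 μ = m},
      m ≤ gnat n := by
    rintro m ⟨μ, _, rfl⟩
    exact pkext_le_gnat μ
  refine ⟨?_, ?_, ?_, ?_⟩
  · intro h0
    have hform := gnat_mod0 h0 hn
    constructor
    · refine ⟨repPart n (n/4) (by omega), ?_, ?_⟩
      · intro i hi
        have h4 := Multiset.eq_of_mem_replicate (show i ∈ Multiset.replicate (n/4) 4 from hi)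
        subst h4
        decide
      · show ((Multiset.replicate (n/4) 4).map (pk 6)).prod = _
        rw [Multiset.map_replicate, Multiset.prod_replicate, hv4]
    · intro m hm
      calc m ≤ gnat n := hub m hm
      _ = 5 ^ (n/4) := hform
  · intro h1
    have hform := gnat_mod1 h1 (by omega)
    constructor
    · refine ⟨consPart n 5 ((n-5)/4) (by norm_num) (by omega), ?_, ?_⟩
      · intro i hi
        rcases Multiset.mem_cons.mp
          (show i ∈ (5:ℕ) ::ₘ Multiset.replicate ((n-5)/4) 4 from hi) with rfl | hi'
        · decide
        · have h4 := Multiset.eq_of_mem_replicate hi'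
          subst h4
          decide
      · show ((5 ::ₘ Multiset.replicate ((n-5)/4) 4).map (pk 6)).prod = _
        rw [Multiset.map_cons, Multiset.prod_cons, Multiset.map_replicate,
          Multiset.prod_replicate, hv4, hv5]
    · intro m hm
      calc m ≤ gnat n := hub m hm
      _ = 7 * 5 ^ ((n-5)/4) := hform
  · intro h2
    have hform := gnat_mod2 h2 hn
    constructor
    · refine ⟨consPart n 2 ((n-2)/4) (by norm_num) (by omega), ?_, ?_⟩
      · intro i hi
        rcases Multiset.mem_cons.mp
          (show i ∈ (2:ℕ) ::ₘ Multiset.replicate ((n-2)/4) 4 from hi) with rfl | hi'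
        · decide
        · have h4 := Multiset.eq_of_mem_replicate hi'
          subst h4
          decide
      · show ((2 ::ₘ Multiset.replicate ((n-2)/4) 4).map (pk 6)).prod = _
        rw [Multiset.map_cons, Multiset.prod_cons, Multiset.map_replicate,
          Multiset.prod_replicate, hv4, hv2]
    · intro m hm
      calc m ≤ gnat n := hub m hm
      _ = 2 * 5 ^ ((n-2)/4) := hform
  · intro h3
    have hform := gnat_mod3 h3 hn
    constructor
    · refine ⟨consPart n 3 ((n-3)/4) (by norm_num) (by omega), ?_, ?_⟩
      · intro i hi
        rcases Multiset.mem_cons.mp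
          (show i ∈ (3:ℕ) ::ₘ Multiset.replicate ((n-3)/4) 4 from hi) with rfl | hi'
        · decide
        · have h4 := Multiset.eq_of_mem_replicate hi'
          subst h4
          decide
      · show ((3 ::ₘ Multiset.replicate ((n-3)/4) 4).map (pk 6)).prod = _
        rw [Multiset.map_cons, Multiset.prod_cons, Multiset.map_replicate,
          Multiset.prod_replicate, hv4, hv3]
    · intro m hm
      calc m ≤ gnat n := hub m hm
      _ = 3 * 5 ^ ((n-3)/4) := hform
end

section
/- For n ≡ 0 (mod 4) with n ≥ 2, the maximum of p_6(μ) over 6-regular partitions μ of n is attained exactly at the partition consisting of n/4 parts equal to 4. -/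
open Multiset

/-! ### Auxiliary counting machinery for partitions -/

lemma aux_mem_le_sum {s : Multiset ℕ} {x : ℕ} (hx : x ∈ s) : x ≤ s.sum := by
  rcases Multiset.exists_cons_of_mem hx with ⟨t, rfl⟩
  simp

lemma aux_parts_ne_zero {n : ℕ} (hn : 1 ≤ n) (μ : n.Partition) : μ.parts ≠ 0 := by
  intro h
  have h2 := μ.parts_sum
  rw [h] at h2
  simp at h2
  omega

/-- `Npart n k` is the number of partitions of `n` all of whose parts are `≥ k`. -/
noncomputable def Npart (n k : ℕ) : ℕ :=
  Fintype.card {μ : n.Partition // ∀ i ∈ μ.parts, k ≤ i}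

lemma Npart_zero (k : ℕ) : Npart 0 k ≤ 1 := by
  apply Fintype.card_le_one_iff.2
  rintro ⟨a, ha⟩ ⟨b, hb⟩
  have h0 : ∀ μ : (0:ℕ).Partition, μ.parts = 0 := by
    intro μ
    by_contra h
    rcases Multiset.exists_mem_of_ne_zero h with ⟨x, hx⟩
    have hx0 := μ.parts_pos hx
    have h1 : x ≤ μ.parts.sum := aux_mem_le_sum hx
    have h2 := μ.parts_sum
    omega
  exact Subtype.ext (Nat.Partition.ext (by rw [h0 a, h0 b]))

lemma Npart_small (n k : ℕ) (h1 : 1 ≤ n) (h2 : n < k) : Npart n k = 0 := by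
  rw [Npart, Fintype.card_eq_zero_iff]
  constructor
  rintro ⟨μ, hμ⟩
  rcases Multiset.exists_mem_of_ne_zero (aux_parts_ne_zero h1 μ) with ⟨x, hx⟩
  have := hμ x hx
  have : x ≤ μ.parts.sum := aux_mem_le_sum hx
  have := μ.parts_sum
  omega

lemma Npart_step (n k : ℕ) (hk : 1 ≤ k) :
    Npart n k ≤ Npart n (k+1) + Npart (n-k) k := by
  rw [Npart, Npart, Npart, ← Fintype.card_sum]
  have sum_erase : ∀ (μ : n.Partition), k ∈ μ.parts → (μ.parts.erase k).sum = n - k := by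
    intro μ hm
    have h1 : k + (μ.parts.erase k).sum = μ.parts.sum := by
      rw [← Multiset.sum_cons, Multiset.cons_erase hm]
    have h2 := μ.parts_sum
    omega
  let f : {μ : n.Partition // ∀ i ∈ μ.parts, k ≤ i} →
      {μ : n.Partition // ∀ i ∈ μ.parts, k+1 ≤ i} ⊕ {μ : (n-k).Partition // ∀ i ∈ μ.parts, k ≤ i} :=
    fun x =>
      if hm : k ∈ x.1.parts then
        Sum.inr ⟨⟨x.1.parts.erase k,
            fun hi => x.1.parts_pos (Multiset.mem_of_mem_erase hi),
            sum_erase x.1 hm⟩,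
          fun i hi => x.2 i (Multiset.mem_of_mem_erase hi)⟩
      else
        Sum.inl ⟨x.1, fun i hi => by
          have h1 := x.2 i hi
          have h2 : i ≠ k := fun h => hm (h ▸ hi)
          omega⟩
  apply Fintype.card_le_of_injective f
  rintro ⟨μa, ha⟩ ⟨μb, hb⟩ hab
  by_cases hma : k ∈ μa.parts <;> by_cases hmb : k ∈ μb.parts <;>
    simp only [f, dif_pos, dif_neg, hma, hmb, dite_true, dite_false] at hab
  · apply Subtype.ext
    apply Nat.Partition.ext
    have h1 : μa.parts.erase k = μb.parts.erase k := by
      have := Sum.inr.inj hab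
      have := congrArg (fun z => z.1.parts) this
      simpa using this
    rw [← Multiset.cons_erase hma, ← Multiset.cons_erase hmb, h1]
  · exact absurd hab (by simp)
  · exact absurd hab (by simp)
  · apply Subtype.ext
    apply Nat.Partition.ext
    have := Sum.inl.inj hab
    have := congrArg (fun z => z.1.parts) this
    simpa using this

lemma Npart_down (n k : ℕ) (hk : 2 ≤ k) (hn : 1 ≤ n) :
    Npart n k ≤ Npart (n-1) (k-1) := by
  rw [Npart, Npart]
  have hne : ∀ μ : n.Partition, μ.parts.toFinset.Nonempty := by
    intro μ
    rw [Multiset.toFinset_nonempty]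
    exact aux_parts_ne_zero hn μ
  set m : n.Partition → ℕ := fun μ => μ.parts.toFinset.min' (hne μ) with hm
  have hmem : ∀ μ : n.Partition, m μ ∈ μ.parts := by
    intro μ
    have := Finset.min'_mem _ (hne μ)
    simpa using this
  have hmin : ∀ μ : n.Partition, ∀ i ∈ μ.parts, m μ ≤ i := by
    intro μ i hi
    exact Finset.min'_le _ _ (by simpa using hi)
  have sum_erase : ∀ (μ : n.Partition), (μ.parts.erase (m μ)).sum = n - m μ := by
    intro μ
    have h1 : m μ + (μ.parts.erase (m μ)).sum = μ.parts.sum := by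
      rw [← Multiset.sum_cons, Multiset.cons_erase (hmem μ)]
    have h2 := μ.parts_sum
    omega
  let f : {μ : n.Partition // ∀ i ∈ μ.parts, k ≤ i} →
      {μ : (n-1).Partition // ∀ i ∈ μ.parts, k-1 ≤ i} :=
    fun x =>
      ⟨⟨(m x.1 - 1) ::ₘ (x.1.parts.erase (m x.1)),
        by
          intro i hi
          rcases Multiset.mem_cons.1 hi with h | h
          · have := x.2 _ (hmem x.1)
            omega
          · exact x.1.parts_pos (Multiset.mem_of_mem_erase h),
        by
          rw [Multiset.sum_cons, sum_erase x.1]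
          have h1 : m x.1 ≤ n := by
            have := aux_mem_le_sum (hmem x.1)
            rw [x.1.parts_sum] at this
            exact this
          have h2 := x.2 _ (hmem x.1)
          omega⟩,
      by
        intro i hi
        rcases Multiset.mem_cons.1 hi with h | h
        · have := x.2 _ (hmem x.1); omega
        · have := x.2 i (Multiset.mem_of_mem_erase h); omega⟩
  apply Fintype.card_le_of_injective f
  rintro ⟨μa, ha⟩ ⟨μb, hb⟩ hab
  have hparts : (m μa - 1) ::ₘ (μa.parts.erase (m μa)) = (m μb - 1) ::ₘ (μb.parts.erase (m μb)) := by
    have := congrArg (fun z => z.1.parts) hab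
    simpa [f] using this
  have key : ∀ (μ : n.Partition), (∀ i ∈ μ.parts, k ≤ i) → ∀ j,
      j ∈ ((m μ - 1) ::ₘ (μ.parts.erase (m μ))) → m μ - 1 ≤ j := by
    intro μ hμ j hj
    rcases Multiset.mem_cons.1 hj with h | h
    · omega
    · have := hmin μ j (Multiset.mem_of_mem_erase h)
      omega
  have hmm : m μa = m μb := by
    have h1 : m μa - 1 ≤ m μb - 1 := by
      apply key μa ha
      rw [hparts]
      exact Multiset.mem_cons_self _ _
    have h2 : m μb - 1 ≤ m μa - 1 := by
      apply key μb hb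
      rw [← hparts]
      exact Multiset.mem_cons_self _ _
    have h3 := ha _ (hmem μa)
    have h4 := hb _ (hmem μb)
    omega
  apply Subtype.ext
  apply Nat.Partition.ext
  rw [hmm] at hparts
  show μa.parts = μb.parts
  have herase := (Multiset.cons_inj_right _).1 hparts
  have hma : m μb ∈ μa.parts := hmm ▸ hmem μa
  calc μa.parts = m μb ::ₘ μa.parts.erase (m μb) := (Multiset.cons_erase hma).symm
    _ = m μb ::ₘ μb.parts.erase (m μb) := by rw [herase]
    _ = μb.parts := Multiset.cons_erase (hmem μb)

/-- Computable upper bound for `Npart` (fuelled recursion). -/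
def Nv (f n k : ℕ) : ℕ :=
  if n = 0 then 1 else
  match f with
  | 0 => 0
  | f+1 => if k = 0 then 0 else if n < k then 0 else Nv f (n-k) k + Nv f n (k+1)

lemma Npart_le_Nv (f : ℕ) : ∀ n k, 1 ≤ k → 2*n+2 ≤ f + k → Npart n k ≤ Nv f n k := by
  induction f with
  | zero =>
    intro n k hk hf
    rcases Nat.eq_zero_or_pos n with rfl | hn
    · rw [Nv]; simpa using Npart_zero k
    · rw [Npart_small n k hn (by omega)]; omega
  | succ f ih =>
    intro n k hk hf
    rcases Nat.eq_zero_or_pos n with rfl | hn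
    · rw [Nv]; simpa using Npart_zero k
    · by_cases hnk : n < k
      · rw [Npart_small n k hn hnk]; omega
      · rw [Nv, if_neg (by omega : ¬ n = 0)]
        show Npart n k ≤ if k = 0 then 0 else if n < k then 0 else Nv f (n-k) k + Nv f n (k+1)
        rw [if_neg (by omega : ¬ k = 0), if_neg hnk]
        calc Npart n k ≤ Npart n (k+1) + Npart (n-k) k := Npart_step n k hk
          _ ≤ Nv f n (k+1) + Nv f (n-k) k := by
              gcongr
              · exact ih n (k+1) (by omega) (by omega)
              · exact ih (n-k) k hk (by omega)
          _ = Nv f (n-k) k + Nv f n (k+1) := by ring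

def Aconst : ℕ → ℕ
  | 1 => 147783500
  | 2 => 29556700
  | 3 => 10640400
  | 4 => 5192500
  | 5 => 3065600
  | 6 => 2061000
  | 7 => 1520600
  | 8 => 1201600
  | _ => 1000000

theorem mainC (n k : ℕ) (hk1 : 1 ≤ k) (hk9 : k ≤ 9) :
    1000000 * 4^n * Npart n k ≤ Aconst k * 5^n := by
  rcases Nat.eq_zero_or_pos n with rfl | hn
  · have h1 := Npart_zero k
    have h2 : 1000000 ≤ Aconst k := by
      interval_cases k <;> simp [Aconst]
    simpa using Nat.le_trans (by omega) h2
  by_cases hnk : n < k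
  · rw [Npart_small n k hn hnk]; simp
  rcases Nat.lt_or_ge k 9 with hk8 | hk9'
  · have hstep := Npart_step n k hk1
    have h1 := mainC n (k+1) (by omega) (by omega)
    have h2 := mainC (n-k) k hk1 hk9
    have hconst : Aconst (k+1) * 5^k + Aconst k * 4^k ≤ Aconst k * 5^k := by
      interval_cases k <;> norm_num [Aconst]
    have e4 : 4^n = 4^k * 4^(n-k) := by rw [← pow_add]; congr 1; omega
    have e5 : 5^n = 5^k * 5^(n-k) := by rw [← pow_add]; congr 1; omega
    calc 1000000 * 4^n * Npart n k
        ≤ 1000000 * 4^n * (Npart n (k+1) + Npart (n-k) k) := by gcongr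
      _ = 1000000 * 4^n * Npart n (k+1) + 4^k * (1000000 * 4^(n-k) * Npart (n-k) k) := by
          rw [e4]; ring
      _ ≤ Aconst (k+1) * 5^n + 4^k * (Aconst k * 5^(n-k)) := by gcongr
      _ = (Aconst (k+1) * 5^k + Aconst k * 4^k) * 5^(n-k) := by rw [e5]; ring
      _ ≤ (Aconst k * 5^k) * 5^(n-k) := by gcongr
      _ = Aconst k * 5^n := by rw [e5]; ring
  · have hk9e : k = 9 := by omega
    subst hk9e
    have hdown : Npart n 9 ≤ Npart (n-1) 8 := by
      simpa using Npart_down n 9 (by omega) hn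
    have h1 := mainC (n-1) 8 (by omega) (by omega)
    have e4 : 4^n = 4 * 4^(n-1) := by rw [← pow_succ']; congr 1; omega
    have e5 : 5^n = 5 * 5^(n-1) := by rw [← pow_succ']; congr 1; omega
    calc 1000000 * 4^n * Npart n 9
        = 4 * (1000000 * 4^(n-1) * Npart n 9) := by rw [e4]; ring
      _ ≤ 4 * (1000000 * 4^(n-1) * Npart (n-1) 8) := by gcongr
      _ ≤ 4 * (Aconst 8 * 5^(n-1)) := by gcongr
      _ = (4 * 1201600) * 5^(n-1) := by simp only [Aconst]; ring
      _ ≤ (5 * 1000000) * 5^(n-1) := Nat.mul_le_mul_right _ (by norm_num)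
      _ = Aconst 9 * 5^n := by rw [e5]; simp only [Aconst]; ring
termination_by 10*n + 9 - k
decreasing_by all_goals omega

set_option maxHeartbeats 2000000 in
lemma nv_vals : ∀ n, n < 28 → 5 ≤ n → Nv 58 n 1 ^ 4 < 5 ^ n := by decide

lemma Npart_pow_lt (n : ℕ) (h5 : 5 ≤ n) : Npart n 1 ^ 4 < 5 ^ n := by
  rcases Nat.lt_or_ge n 28 with h28 | h28
  · have h := Npart_le_Nv 58 n 1 (by norm_num) (by omega)
    have h4 := Nat.pow_le_pow_left h 4
    exact lt_of_le_of_lt h4 (nv_vals n h28 h5)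
  · have h1 := mainC n 1 (by norm_num) (by norm_num)
    have h2 : (1000000 * 4^n * Npart n 1) ^ 4 ≤ (Aconst 1 * 5^n) ^ 4 :=
      Nat.pow_le_pow_left h1 4
    have e1 : (1000000 * 4^n * Npart n 1) ^ 4
        = 1000000^4 * 256^n * Npart n 1 ^ 4 := by
      rw [mul_pow, mul_pow, ← pow_mul, mul_comm n 4, pow_mul]
      norm_num
    have e2 : (Aconst 1 * 5^n) ^ 4 = Aconst 1 ^ 4 * 625 ^ n := by
      rw [mul_pow, ← pow_mul, mul_comm n 4, pow_mul]
      norm_num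
    have key : Aconst 1 ^ 4 * 625 ^ n < 1000000^4 * 1280 ^ n := by
      have eA : (625:ℕ) ^ n = 625^28 * 625^(n-28) := by rw [← pow_add]; congr 1; omega
      have eB : (1280:ℕ) ^ n = 1280^28 * 1280^(n-28) := by rw [← pow_add]; congr 1; omega
      have base : Aconst 1 ^ 4 * 625 ^ 28 < 1000000^4 * 1280 ^ 28 := by
        norm_num [Aconst]
      calc Aconst 1 ^ 4 * 625 ^ n = (Aconst 1 ^ 4 * 625^28) * 625^(n-28) := by rw [eA]; ring
        _ < (1000000^4 * 1280^28) * 625^(n-28) := by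
            have hp : 0 < (625:ℕ)^(n-28) := pow_pos (by norm_num) _
            exact mul_lt_mul_of_pos_right base hp
        _ ≤ (1000000^4 * 1280^28) * 1280^(n-28) := by
            gcongr
            norm_num
        _ = 1000000^4 * 1280 ^ n := by rw [eB]; ring
    have final : 1000000^4 * 256^n * Npart n 1 ^ 4 < 1000000^4 * 256^n * 5 ^ n := by
      have e3 : (1280:ℕ)^n = 256^n * 5^n := by rw [← mul_pow]; norm_num
      calc 1000000^4 * 256^n * Npart n 1 ^ 4 ≤ Aconst 1 ^ 4 * 625 ^ n := by
            rw [← e1, ← e2]; exact h2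
        _ < 1000000^4 * 1280^n := key
        _ = 1000000^4 * 256^n * 5^n := by rw [e3]; ring
    exact Nat.lt_of_mul_lt_mul_left final

lemma pk_le_Npart (m : ℕ) : pk 6 m ≤ Npart m 1 := by
  apply Fintype.card_le_of_injective
    (fun x => (⟨x.1, fun i hi => x.1.parts_pos hi⟩ :
      {μ : m.Partition // ∀ i ∈ μ.parts, 1 ≤ i}))
  intro a b h
  have h2 := congrArg Subtype.val h
  exact Subtype.ext h2

lemma pk_pow_lt (m : ℕ) (h1 : 1 ≤ m) (h4 : m ≠ 4) : pk 6 m ^ 4 < 5 ^ m := by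
  rcases Nat.lt_or_ge m 5 with h5 | h5
  · have h := (pk_le_Npart m).trans (Npart_le_Nv 58 m 1 (by norm_num) (by omega))
    have hp := Nat.pow_le_pow_left h 4
    interval_cases m
    · exact lt_of_le_of_lt hp (by decide)
    · exact lt_of_le_of_lt hp (by decide)
    · exact lt_of_le_of_lt hp (by decide)
    · exact absurd rfl h4
  · exact lt_of_le_of_lt (Nat.pow_le_pow_left (pk_le_Npart m) 4) (Npart_pow_lt m h5)

lemma pk_pow_le (m : ℕ) (h1 : 1 ≤ m) : pk 6 m ^ 4 ≤ 5 ^ m := by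
  rcases eq_or_ne m 4 with rfl | h4
  · have h := (pk_le_Npart 4).trans (Npart_le_Nv 58 4 1 (by norm_num) (by omega))
    exact le_trans (Nat.pow_le_pow_left h 4) (by decide)
  · exact le_of_lt (pk_pow_lt m h1 h4)

def mkP {n : ℕ} (l : List ℕ) (h1 : ∀ i ∈ (l : Multiset ℕ), 0 < i) (h2 : (l : Multiset ℕ).sum = n) :
    Nat.Partition n := ⟨(l : Multiset ℕ), fun hi => h1 _ hi, h2⟩

def gfive : Fin 5 → {μ : (4:ℕ).Partition // ∀ i ∈ μ.parts, ¬ 6 ∣ i} :=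
  fun j => match j with
  | 0 => ⟨mkP [4] (by decide) (by decide), by decide⟩
  | 1 => ⟨mkP [3,1] (by decide) (by decide), by decide⟩
  | 2 => ⟨mkP [2,2] (by decide) (by decide), by decide⟩
  | 3 => ⟨mkP [2,1,1] (by decide) (by decide), by decide⟩
  | 4 => ⟨mkP [1,1,1,1] (by decide) (by decide), by decide⟩

lemma pk_six_four : pk 6 4 = 5 := by
  have hle : pk 6 4 ≤ 5 := by
    have h := (pk_le_Npart 4).trans (Npart_le_Nv 58 4 1 (by norm_num) (by omega))
    have : Nv 58 4 1 = 5 := by decide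
    omega
  have hge : 5 ≤ pk 6 4 := by
    have hg : Function.Injective gfive := by decide
    simpa [pk] using Fintype.card_le_of_injective gfive hg
  omega

lemma prodW (t : Multiset ℕ) (ht : ∀ i ∈ t, 1 ≤ i) :
    ((t.map (pk 6)).prod) ^ 4 ≤ 5 ^ t.sum := by
  induction t using Multiset.induction_on with
  | empty => simp
  | cons a s ih =>
    simp only [Multiset.map_cons, Multiset.prod_cons, Multiset.sum_cons, mul_pow, pow_add]
    exact Nat.mul_le_mul (pk_pow_le a (ht a (Multiset.mem_cons_self a s)))
      (ih fun i hi => ht i (Multiset.mem_cons_of_mem hi))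

theorem maxp6_unique_maximizer (n : ℕ) (hn : 2 ≤ n) (h4 : n % 4 = 0) :
    ∀ μ : n.Partition, (∀ i ∈ μ.parts, ¬ 6 ∣ i) →
      ((∀ ν : n.Partition, (∀ i ∈ ν.parts, ¬ 6 ∣ i) → pkext 6 ν ≤ pkext 6 μ) ↔
        μ.parts = Multiset.replicate (n / 4) 4) := by
  intro μ hμ
  have hdvd : 4 ∣ n := Nat.dvd_of_mod_eq_zero h4
  have hn4 : n / 4 * 4 = n := Nat.div_mul_cancel hdvd
  -- the all-fours partition
  have hsum4 : (Multiset.replicate (n / 4) 4).sum = n := by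
    rw [Multiset.sum_replicate, smul_eq_mul, mul_comm]
    omega
  let ν4 : n.Partition := ⟨Multiset.replicate (n / 4) 4,
    fun hi => by rw [Multiset.eq_of_mem_replicate hi]; norm_num, hsum4⟩
  have hν4reg : ∀ i ∈ ν4.parts, ¬ 6 ∣ i := by
    intro i hi
    have : i = 4 := Multiset.eq_of_mem_replicate hi
    subst this
    decide
  have hν4val : pkext 6 ν4 = 5 ^ (n / 4) := by
    show ((Multiset.replicate (n / 4) 4).map (pk 6)).prod = 5 ^ (n / 4)
    rw [Multiset.map_replicate, Multiset.prod_replicate, pk_six_four]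
  have pow5n : (5:ℕ) ^ n = (5 ^ (n / 4)) ^ 4 := by
    rw [← pow_mul, hn4]
  -- non-strict bound for any partition
  have hbound : ∀ ν : n.Partition, pkext 6 ν ≤ 5 ^ (n / 4) := by
    intro ν
    have h1 : (pkext 6 ν) ^ 4 ≤ 5 ^ n := by
      have := prodW ν.parts (fun i hi => ν.parts_pos hi)
      rwa [ν.parts_sum] at this
    rw [pow5n] at h1
    exact (Nat.pow_le_pow_iff_left (by norm_num)).1 h1
  constructor
  · -- maximality implies all parts are 4
    intro hmax
    by_contra hne
    have hex : ∃ m ∈ μ.parts, m ≠ 4 := by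
      by_contra hall
      push_neg at hall
      have hrep : μ.parts = Multiset.replicate μ.parts.card 4 :=
        Multiset.eq_replicate_card.2 hall
      have hsum : μ.parts.sum = μ.parts.card * 4 := by
        rw [hrep, Multiset.sum_replicate, smul_eq_mul, Multiset.card_replicate]
      have hps := μ.parts_sum
      have hcard : μ.parts.card = n / 4 := by omega
      exact hne (by rw [hrep, hcard])
    obtain ⟨m, hm, hm4⟩ := hex
    obtain ⟨t, ht⟩ := Multiset.exists_cons_of_mem hm
    have hm1 : 1 ≤ m := μ.parts_pos hm
    have hstrict : (pkext 6 μ) ^ 4 < 5 ^ n := by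
      have hsum : m + t.sum = n := by
        have := μ.parts_sum
        rw [ht, Multiset.sum_cons] at this
        exact this
      have hP : ((t.map (pk 6)).prod) ^ 4 ≤ 5 ^ t.sum :=
        prodW t (fun i hi => μ.parts_pos (by rw [ht]; exact Multiset.mem_cons_of_mem hi))
      have hH : (pk 6 m) ^ 4 < 5 ^ m := pk_pow_lt m hm1 hm4
      have hfact : pkext 6 μ = pk 6 m * (t.map (pk 6)).prod := by
        show (μ.parts.map (pk 6)).prod = _
        rw [ht, Multiset.map_cons, Multiset.prod_cons]
      rw [hfact, mul_pow]
      calc (pk 6 m) ^ 4 * ((t.map (pk 6)).prod) ^ 4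
          ≤ (pk 6 m) ^ 4 * 5 ^ t.sum := by gcongr
        _ < 5 ^ m * 5 ^ t.sum := by
            have hp : 0 < (5:ℕ) ^ t.sum := pow_pos (by norm_num) _
            exact mul_lt_mul_of_pos_right hH hp
        _ = 5 ^ n := by rw [← pow_add, hsum]
    have hge : 5 ^ (n / 4) ≤ pkext 6 μ := by
      rw [← hν4val]
      exact hmax ν4 hν4reg
    have hcon : 5 ^ n ≤ (pkext 6 μ) ^ 4 := by
      rw [pow5n]
      exact Nat.pow_le_pow_left hge 4
    omega
  · intro hrep ν hν
    have : pkext 6 μ = 5 ^ (n / 4) := by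
      show (μ.parts.map (pk 6)).prod = 5 ^ (n / 4)
      rw [hrep, Multiset.map_replicate, Multiset.prod_replicate, pk_six_four]
    rw [this]
    exact hbound ν
end
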